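/- For every simple graph G, the map sending a co-2-plex S of G to the set W ∪ F, where W is the set of vertices of S that are isolated in the induced subgraph G[S] and F is the set of edges of G[S], is a bijection between the co-2-plexes of G and the independent (stable) sets of the utter graph u(G). -/

import Mathlib

open SimpleGraph

universe u

variable {V : Type u}

/-- The clique number of a graph, as an extended natural number:
the supremum of the cardinalities of its (finite) cliques. -/
noncomputable def cliqueNumber (G : SimpleGraph V) : ℕ∞ :=
  ⨆ (t : Finset V) (_ : G.IsClique (t : Set V)), (t.card : ℕ∞)

/-- A graph is perfect if every induced subgraph has chromatic number equal
to its clique number. -/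
def IsPerfect (G : SimpleGraph V) : Prop :=
  ∀ s : Set V, (G.induce s).chromaticNumber = cliqueNumber (G.induce s)

/-- The contraction `G/F` of a set `F` of edges: vertices are the connected components
of the spanning subgraph `(V, F)`, two distinct components being adjacent iff `G` has
an edge between them. -/
def contractEdges (G : SimpleGraph V) (F : Set (Sym2 V)) :
    SimpleGraph (SimpleGraph.fromEdgeSet F).ConnectedComponent where
  Adj c d := c ≠ d ∧ ∃ x y : V,
      (SimpleGraph.fromEdgeSet F).connectedComponentMk x = c ∧
      (SimpleGraph.fromEdgeSet F).connectedComponentMk y = d ∧ G.Adj x y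
  symm := ⟨by
    rintro c d ⟨hne, x, y, hx, hy, hxy⟩
    exact ⟨hne.symm, y, x, hy, hx, hxy.symm⟩⟩
  loopless := ⟨fun c h => h.1 rfl⟩

/-- A graph is contraction perfect if the contraction of any set of its edges
yields a perfect graph. -/
def IsContractionPerfect (G : SimpleGraph V) : Prop :=
  ∀ F : Set (Sym2 V), F ⊆ G.edgeSet → IsPerfect (contractEdges G F)

/-- `G` contains a hole (induced cycle, `n ≥ 4`) on `n` vertices. -/
def HasHole (G : SimpleGraph V) (n : ℕ) : Prop :=
  4 ≤ n ∧ ∃ s : Set V, Nonempty (G.induce s ≃g cycleGraph n)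

/-- `G` contains an antihole (induced complement of a cycle, `n ≥ 4`) on `n` vertices. -/
def HasAntihole (G : SimpleGraph V) (n : ℕ) : Prop :=
  4 ≤ n ∧ ∃ s : Set V, Nonempty ((G.induce s)ᶜ ≃g cycleGraph n)

/-- `u`, `v` and `w 0, …, w (p-1)` (thought of as `w_1, …, w_p`) form an expanded antihole
in `G`: `uv` is an edge, the `w i` are distinct vertices different from `u` and `v`
inducing an antipath in this order, `u` is adjacent exactly to `w_2, …, w_{p-2}` among them,
and `v` is adjacent exactly to `w_3, …, w_{p-1}` among them. -/
def IsExpandedAntihole (G : SimpleGraph V) (u v : V) (p : ℕ) (w : Fin p → V) : Prop :=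
  6 ≤ p ∧ Even p ∧ G.Adj u v ∧ Function.Injective w ∧
  (∀ i, w i ≠ u) ∧ (∀ i, w i ≠ v) ∧
  (∀ i j, G.Adj (w i) (w j) ↔ (i ≠ j ∧ (i : ℕ) + 1 ≠ (j : ℕ) ∧ (j : ℕ) + 1 ≠ (i : ℕ))) ∧
  (∀ i, G.Adj u (w i) ↔ (1 ≤ (i : ℕ) ∧ (i : ℕ) ≤ p - 3)) ∧
  (∀ i, G.Adj v (w i) ↔ (2 ≤ (i : ℕ) ∧ (i : ℕ) ≤ p - 2))

/-- The contraction `G/uv` of a single edge `uv`: delete `u` and `v` and add a new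
vertex (here `none`) adjacent to every vertex of `N(u) ∪ N(v)`. -/
def contractOne (G : SimpleGraph V) (u v : V) :
    SimpleGraph (Option {x : V // x ≠ u ∧ x ≠ v}) where
  Adj a b :=
    match a, b with
    | some x, some y => G.Adj x.1 y.1
    | some x, none => G.Adj x.1 u ∨ G.Adj x.1 v
    | none, some y => G.Adj u y.1 ∨ G.Adj v y.1
    | none, none => False
  symm := ⟨by
    rintro (_ | x) (_ | y) h
    · exact h
    · exact h.imp (fun h' => h'.symm) (fun h' => h'.symm)
    · exact h.imp (fun h' => h'.symm) (fun h' => h'.symm)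
    · exact h.symm⟩
  loopless := ⟨by
    rintro (_ | x) h
    · exact h
    · exact G.loopless.irrefl _ h⟩

/-- The utter graph of `G`, on vertex set `V(G) ∪ E(G)`. -/
def utterGraph (G : SimpleGraph V) : SimpleGraph (V ⊕ G.edgeSet) where
  Adj a b :=
    match a, b with
    | Sum.inl x, Sum.inl y => G.Adj x y
    | Sum.inl x, Sum.inr e => x ∈ (e : Sym2 V) ∨ ∃ y ∈ (e : Sym2 V), G.Adj x y
    | Sum.inr e, Sum.inl x => x ∈ (e : Sym2 V) ∨ ∃ y ∈ (e : Sym2 V), G.Adj x y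
    | Sum.inr e, Sum.inr f => e ≠ f ∧
        ((∃ x, x ∈ (e : Sym2 V) ∧ x ∈ (f : Sym2 V)) ∨
          ∃ x ∈ (e : Sym2 V), ∃ y ∈ (f : Sym2 V), G.Adj x y)
  symm := ⟨by
    rintro (x | e) (y | f) h
    · exact h.symm
    · exact h
    · exact h
    · exact ⟨h.1.symm, h.2.imp (fun ⟨x, hx⟩ => ⟨x, hx.2, hx.1⟩)
        (fun ⟨x, hx, y, hy, hxy⟩ => ⟨y, hy, x, hx, hxy.symm⟩)⟩⟩
  loopless := ⟨by
    rintro (x | e) h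
    · exact G.loopless.irrefl _ h
    · exact h.1 rfl⟩

/-- A stable (independent) set: a set of pairwise nonadjacent vertices. -/
def IsStableSet (G : SimpleGraph V) (s : Set V) : Prop :=
  ∀ x ∈ s, ∀ y ∈ s, ¬G.Adj x y

/-- A co-2-plex: a set of vertices inducing a subgraph of maximum degree at most one. -/
def IsCo2Plex (G : SimpleGraph V) (S : Set V) : Prop :=
  ∀ x ∈ S, ∀ y ∈ S, ∀ z ∈ S, G.Adj x y → G.Adj x z → y = z

/-- The graph obtained from `G` by adding a true twin (`none`) of the vertex `v`. -/
def addTrueTwin (G : SimpleGraph V) (v : V) : SimpleGraph (Option V) where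
  Adj a b :=
    match a, b with
    | some x, some y => G.Adj x y
    | some x, none => x = v ∨ G.Adj x v
    | none, some y => y = v ∨ G.Adj y v
    | none, none => False
  symm := ⟨by rintro (_ | x) (_ | y) h <;> first | exact h | exact h.symm⟩
  loopless := ⟨by
    rintro (_ | x) h
    · exact h
    · exact G.loopless.irrefl _ h⟩

/-- The graph obtained from `G` by adding a false twin (`none`) of the vertex `v`. -/
def addFalseTwin (G : SimpleGraph V) (v : V) : SimpleGraph (Option V) where
  Adj a b :=
    match a, b with
    | some x, some y => G.Adj x y
    | some x, none => G.Adj x v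
    | none, some y => G.Adj y v
    | none, none => False
  symm := ⟨by rintro (_ | x) (_ | y) h <;> first | exact h | exact h.symm⟩
  loopless := ⟨by
    rintro (_ | x) h
    · exact h
    · exact G.loopless.irrefl _ h⟩

-- helper: other endpoint
lemma edge_other {G : SimpleGraph V} (e : G.edgeSet) {x : V} (hx : x ∈ (e : Sym2 V)) :
    ∃ y, G.Adj x y ∧ y ∈ (e : Sym2 V) ∧ (e : Sym2 V) = s(x, y) := by
  obtain ⟨e, he⟩ := e
  induction e using Sym2.ind with
  | _ a b =>
    simp only [Sym2.mem_iff] at hx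
    rcases hx with rfl | rfl
    · exact ⟨b, he, by simp, rfl⟩
    · exact ⟨a, (G.mem_edgeSet.1 he).symm, by simp, Sym2.eq_swap⟩

-- helper: two edges of G[S] sharing a vertex are equal
lemma shared_eq {G : SimpleGraph V} {S : Set V} (hS : IsCo2Plex G S)
    (e f : G.edgeSet) (he : ∀ z ∈ (e : Sym2 V), z ∈ S) (hf : ∀ z ∈ (f : Sym2 V), z ∈ S)
    {x : V} (hxe : x ∈ (e : Sym2 V)) (hxf : x ∈ (f : Sym2 V)) : e = f := by
  obtain ⟨y, hxy, hye, hey⟩ := edge_other e hxe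
  obtain ⟨z, hxz, hzf, hfz⟩ := edge_other f hxf
  have : y = z := hS x (he x hxe) y (he y hye) z (hf z hzf) hxy hxz
  exact Subtype.ext (by rw [hey, hfz, this])

/-- The map sending a co-2-plex `S` of `G` to the union of the set of
isolated vertices of `G[S]` and the set of edges of `G[S]` is a bijection between
the co-2-plexes of `G` and the stable sets of the utter graph `u(G)`. -/
theorem co2plex_stable_bijection {V : Type u} (G : SimpleGraph V) :
    Set.BijOn
      (fun S : Set V =>
        (Sum.inl '' {x ∈ S | ∀ y ∈ S, ¬G.Adj x y} : Set (V ⊕ G.edgeSet)) ∪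
          Sum.inr '' {e : G.edgeSet | ∀ x ∈ (e : Sym2 V), x ∈ S})
      {S : Set V | IsCo2Plex G S}
      {T : Set (V ⊕ G.edgeSet) | IsStableSet (utterGraph G) T} := by
  refine ⟨?_, ?_, ?_⟩
  · -- MapsTo
    intro S hS
    simp only [Set.mem_setOf_eq] at hS ⊢
    intro p hp q hq hadj
    rcases hp with ⟨x, ⟨hxS, hxiso⟩, rfl⟩ | ⟨e, heS, rfl⟩ <;>
      rcases hq with ⟨y, ⟨hyS, hyiso⟩, rfl⟩ | ⟨f, hfS, rfl⟩
    · exact hxiso y hyS hadj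
    · -- inl x, inr f
      rcases (hadj : x ∈ (f : Sym2 V) ∨ ∃ y ∈ (f : Sym2 V), G.Adj x y) with hxf | ⟨y, hyf, hxy⟩
      · obtain ⟨y, hxy, hyf, -⟩ := edge_other f hxf
        exact hxiso y (hfS y hyf) hxy
      · exact hxiso y (hfS y hyf) hxy
    · -- inr e, inl y
      rcases (hadj : y ∈ (e : Sym2 V) ∨ ∃ x ∈ (e : Sym2 V), G.Adj y x) with hye | ⟨x, hxe, hyx⟩
      · obtain ⟨x, hyx, hxe, -⟩ := edge_other e hye
        exact hyiso x (heS x hxe) hyx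
      · exact hyiso x (heS x hxe) hyx
    · -- inr e, inr f
      obtain ⟨hne, hcase⟩ :=
        (hadj : e ≠ f ∧ ((∃ x, x ∈ (e : Sym2 V) ∧ x ∈ (f : Sym2 V)) ∨
          ∃ x ∈ (e : Sym2 V), ∃ y ∈ (f : Sym2 V), G.Adj x y))
      rcases hcase with ⟨x, hxe, hxf⟩ | ⟨x, hxe, y, hyf, hxy⟩
      · exact hne (shared_eq hS e f heS hfS hxe hxf)
      · obtain ⟨y', hxy', hy'e, -⟩ := edge_other e hxe
        have : y' = y := hS x (heS x hxe) y' (heS y' hy'e) y (hfS y hyf) hxy' hxy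
        exact hne (shared_eq hS e f heS hfS (this ▸ hy'e) hyf)
  · -- InjOn
    have key : ∀ S₁ ∈ {S : Set V | IsCo2Plex G S}, ∀ S₂ ∈ {S : Set V | IsCo2Plex G S},
        (Sum.inl '' {x ∈ S₁ | ∀ y ∈ S₁, ¬G.Adj x y} : Set (V ⊕ G.edgeSet)) ∪
          Sum.inr '' {e : G.edgeSet | ∀ x ∈ (e : Sym2 V), x ∈ S₁} =
        (Sum.inl '' {x ∈ S₂ | ∀ y ∈ S₂, ¬G.Adj x y} : Set (V ⊕ G.edgeSet)) ∪
          Sum.inr '' {e : G.edgeSet | ∀ x ∈ (e : Sym2 V), x ∈ S₂} →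
        S₁ ⊆ S₂ := by
      intro S₁ h₁ S₂ h₂ heq x hx
      by_cases hiso : ∀ y ∈ S₁, ¬G.Adj x y
      · have : (Sum.inl x : V ⊕ G.edgeSet) ∈
            (Sum.inl '' {x ∈ S₁ | ∀ y ∈ S₁, ¬G.Adj x y} : Set (V ⊕ G.edgeSet)) ∪
              Sum.inr '' {e : G.edgeSet | ∀ x ∈ (e : Sym2 V), x ∈ S₁} :=
          Or.inl ⟨x, ⟨hx, hiso⟩, rfl⟩
        rw [heq] at this
        rcases this with ⟨x', ⟨hx', -⟩, hx'eq⟩ | ⟨e, -, he⟩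
        · exact (Sum.inl.inj hx'eq) ▸ hx'
        · exact absurd he (by simp)
      · push_neg at hiso
        obtain ⟨y, hyS, hxy⟩ := hiso
        have hmem : ∀ z ∈ (s(x, y) : Sym2 V), z ∈ S₁ := by
          intro z hz
          rcases Sym2.mem_iff.1 hz with rfl | rfl
          exacts [hx, hyS]
        have : (Sum.inr (⟨s(x, y), hxy⟩ : G.edgeSet) : V ⊕ G.edgeSet) ∈
            (Sum.inl '' {x ∈ S₁ | ∀ y ∈ S₁, ¬G.Adj x y} : Set (V ⊕ G.edgeSet)) ∪
              Sum.inr '' {e : G.edgeSet | ∀ x ∈ (e : Sym2 V), x ∈ S₁} :=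
          Or.inr ⟨⟨s(x, y), hxy⟩, hmem, rfl⟩
        rw [heq] at this
        rcases this with ⟨x', -, hx'eq⟩ | ⟨e, he, heeq⟩
        · exact absurd hx'eq (by simp)
        · have := Sum.inr.inj heeq
          subst this
          exact he x (by simp)
    intro S₁ h₁ S₂ h₂ heq
    exact Set.Subset.antisymm (key S₁ h₁ S₂ h₂ heq) (key S₂ h₂ S₁ h₁ heq.symm)
  · -- SurjOn
    intro T hT
    simp only [Set.mem_setOf_eq] at hT
    set S : Set V :=
      {x | Sum.inl x ∈ T ∨ ∃ e : G.edgeSet, Sum.inr e ∈ T ∧ x ∈ (e : Sym2 V)} with hSdef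
    -- stability consequences
    have hWW : ∀ {x y : V}, Sum.inl x ∈ T → Sum.inl y ∈ T → ¬G.Adj x y :=
      fun hx hy => hT _ hx _ hy
    have hWE : ∀ {x : V} {e : G.edgeSet}, Sum.inl x ∈ T → Sum.inr e ∈ T →
        x ∉ (e : Sym2 V) ∧ ∀ y ∈ (e : Sym2 V), ¬G.Adj x y := by
      intro x e hx he
      have := hT _ hx _ he
      constructor
      · exact fun h => this (Or.inl h)
      · exact fun y hy hxy => this (Or.inr ⟨y, hy, hxy⟩)
    have hEE : ∀ {e f : G.edgeSet}, Sum.inr e ∈ T → Sum.inr f ∈ T → e ≠ f →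
        (∀ x, ¬(x ∈ (e : Sym2 V) ∧ x ∈ (f : Sym2 V))) ∧
        ∀ x ∈ (e : Sym2 V), ∀ y ∈ (f : Sym2 V), ¬G.Adj x y := by
      intro e f he hf hne
      have := hT _ he _ hf
      constructor
      · exact fun x hx => this ⟨hne, Or.inl ⟨x, hx⟩⟩
      · exact fun x hx y hy hxy => this ⟨hne, Or.inr ⟨x, hx, y, hy, hxy⟩⟩
    -- neighbors in S force a common edge of T
    have nbr : ∀ x ∈ S, ∀ y ∈ S, G.Adj x y →
        ∃ e : G.edgeSet, Sum.inr e ∈ T ∧ x ∈ (e : Sym2 V) ∧ y ∈ (e : Sym2 V) := by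
      intro x hx y hy hxy
      rcases hx with hxT | ⟨e, heT, hxe⟩
      · rcases hy with hyT | ⟨f, hfT, hyf⟩
        · exact absurd hxy (hWW hxT hyT)
        · exact absurd hxy ((hWE hxT hfT).2 y hyf)
      · rcases hy with hyT | ⟨f, hfT, hyf⟩
        · exact absurd hxy.symm ((hWE hyT heT).2 x hxe)
        · by_cases hef : e = f
          · exact ⟨e, heT, hxe, hef ▸ hyf⟩
          · exact absurd hxy ((hEE heT hfT hef).2 x hxe y hyf)
    have hco2 : IsCo2Plex G S := by
      intro x hx y hy z hz hxy hxz
      obtain ⟨e, heT, hxe, hye⟩ := nbr x hx y hy hxy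
      obtain ⟨f, hfT, hxf, hzf⟩ := nbr x hx z hz hxz
      have hef : e = f := by
        by_contra hne
        exact (hEE heT hfT hne).1 x ⟨hxe, hxf⟩
      subst hef
      obtain ⟨e, he⟩ := e
      induction e using Sym2.ind with
      | _ a b =>
        simp only [Sym2.mem_iff] at hxe hye hzf
        rcases hxe with rfl | rfl
        · rcases hye with rfl | rfl
          · exact absurd rfl hxy.ne
          · rcases hzf with rfl | rfl
            · exact absurd rfl hxz.ne
            · rfl
        · rcases hye with rfl | rfl
          · rcases hzf with rfl | rfl
            · rfl
            · exact absurd rfl hxz.ne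
          · exact absurd rfl hxy.ne
    refine ⟨S, hco2, ?_⟩
    ext p
    rcases p with x | e
    · simp only [Set.mem_union, Set.mem_image, Set.mem_setOf_eq]
      constructor
      · rintro (⟨x', ⟨hx'S, hx'iso⟩, hx'eq⟩ | ⟨e, -, he⟩)
        · obtain rfl : x' = x := Sum.inl.inj hx'eq
          rcases hx'S with hxT | ⟨e, heT, hxe⟩
          · exact hxT
          · obtain ⟨y, hxy, hye, -⟩ := edge_other e hxe
            exact absurd hxy (hx'iso y (Or.inr ⟨e, heT, hye⟩))
        · exact absurd he (by simp)
      · intro hxT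
        refine Or.inl ⟨x, ⟨Or.inl hxT, ?_⟩, rfl⟩
        intro y hyS hxy
        obtain ⟨e, heT, hxe, -⟩ := nbr x (Or.inl hxT) y hyS hxy
        exact (hWE hxT heT).1 hxe
    · simp only [Set.mem_union, Set.mem_image, Set.mem_setOf_eq]
      constructor
      · rintro (⟨x, -, hx⟩ | ⟨f, hf, hfeq⟩)
        · exact absurd hx (by simp)
        · rw [← Sum.inr.inj hfeq]
          -- all endpoints of f are in S; show inr f ∈ T
          clear hfeq
          obtain ⟨ev, hev⟩ := f
          revert hf
          induction ev using Sym2.ind with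
          | _ a b =>
            intro hf
            have hab : G.Adj a b := hev
            have haS : a ∈ S := hf a (by simp)
            have hbS : b ∈ S := hf b (by simp)
            obtain ⟨g, hgT, hag, hbg⟩ := nbr a haS b hbS hab
            have : (g : Sym2 V) = s(a, b) := (Sym2.mem_and_mem_iff hab.ne).1 ⟨hag, hbg⟩
            have : g = ⟨s(a, b), hev⟩ := Subtype.ext this
            exact this ▸ hgT
      · intro heT
        exact Or.inr ⟨e, fun z hz => Or.inr ⟨e, heT, hz⟩, rfl⟩
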